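/- The HIP (historic inverse probability) estimator is unbiased: E[Ŷ] = ∑_{j=1}^m α_j. -/

import Mathlib

open MeasureTheory

noncomputable def hipThresh (m k : ℕ) (j : Fin m) (x : Fin m → ℝ) : ℝ :=
  if k ≤ (j : ℕ) then
    sInf {t : ℝ | k ≤ (Finset.univ.filter (fun i : Fin m => i < j ∧ x i ≤ t)).card}
  else 1

lemma hipThresh_congr {m k : ℕ} (j : Fin m) {x y : Fin m → ℝ}
    (h : ∀ i : Fin m, i < j → x i = y i) : hipThresh m k j x = hipThresh m k j y := by
  unfold hipThresh
  have hf : ∀ t : ℝ, (Finset.univ.filter (fun i : Fin m => i < j ∧ x i ≤ t)) =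
      (Finset.univ.filter (fun i : Fin m => i < j ∧ y i ≤ t)) := by
    intro t
    apply Finset.filter_congr
    intro i _
    by_cases hij : i < j
    · simp [hij, h i hij]
    · simp [hij]
  simp only [hf]

lemma hip_card_ge {m k : ℕ} (j : Fin m) (x : Fin m → ℝ) (t : ℝ) (hkj : k ≤ (j : ℕ))
    (h : ∀ i : Fin m, i < j → x i ≤ t) :
    k ≤ (Finset.univ.filter (fun i : Fin m => i < j ∧ x i ≤ t)).card := by
  have hIio : (Finset.Iio j).card = (j : ℕ) := by simp
  calc k ≤ (j : ℕ) := hkj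
    _ = (Finset.Iio j).card := hIio.symm
    _ ≤ _ := by
        apply Finset.card_le_card
        intro i hi
        rw [Finset.mem_Iio] at hi
        simp only [Finset.mem_filter, Finset.mem_univ, true_and]
        exact ⟨hi, h i hi⟩

lemma hip_mono {m k : ℕ} (j : Fin m) (x : Fin m → ℝ) {s t : ℝ} (hst : s ≤ t)
    (hs : s ∈ {t : ℝ | k ≤ (Finset.univ.filter (fun i : Fin m => i < j ∧ x i ≤ t)).card}) :
    t ∈ {t : ℝ | k ≤ (Finset.univ.filter (fun i : Fin m => i < j ∧ x i ≤ t)).card} := by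
  simp only [Set.mem_setOf_eq] at hs ⊢
  refine le_trans hs (Finset.card_le_card ?_)
  intro i hi
  simp only [Finset.mem_filter, Finset.mem_univ, true_and] at hi ⊢
  exact ⟨hi.1, hi.2.trans hst⟩

lemma hip_bddBelow {m k : ℕ} (hk : 1 ≤ k) (j : Fin m) (x : Fin m → ℝ) :
    ∀ t ∈ {t : ℝ | k ≤ (Finset.univ.filter (fun i : Fin m => i < j ∧ x i ≤ t)).card},
      Finset.univ.inf' ⟨j, Finset.mem_univ j⟩ x ≤ t := by
  intro t ht
  simp only [Set.mem_setOf_eq] at ht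
  have hpos : 0 < (Finset.univ.filter (fun i : Fin m => i < j ∧ x i ≤ t)).card :=
    lt_of_lt_of_le hk ht
  obtain ⟨i, hi⟩ := Finset.card_pos.mp hpos
  simp only [Finset.mem_filter, Finset.mem_univ, true_and] at hi
  exact le_trans (Finset.inf'_le x (Finset.mem_univ i)) hi.2

lemma hipThresh_mem {m k : ℕ} (hk : 1 ≤ k) (j : Fin m) (x : Fin m → ℝ)
    (hx : ∀ i, x i ∈ Set.Ioc (0:ℝ) 1) : hipThresh m k j x ∈ Set.Ioc (0:ℝ) 1 := by
  unfold hipThresh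
  split_ifs with hkj
  · have h1S : (1:ℝ) ∈ {t : ℝ | k ≤ (Finset.univ.filter (fun i : Fin m => i < j ∧ x i ≤ t)).card} :=
      hip_card_ge j x 1 hkj (fun i _ => (hx i).2)
    have hne : Set.Nonempty {t : ℝ | k ≤ (Finset.univ.filter (fun i : Fin m => i < j ∧ x i ≤ t)).card} :=
      ⟨1, h1S⟩
    have hlb := hip_bddBelow hk j x
    constructor
    · have h1 : Finset.univ.inf' ⟨j, Finset.mem_univ j⟩ x ≤ sInf _ := le_csInf hne hlb
      have h2 : 0 < Finset.univ.inf' ⟨j, Finset.mem_univ j⟩ x := by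
        exact (Finset.lt_inf'_iff (H := _)).2 fun i _ => (hx i).1
      exact lt_of_lt_of_le h2 h1
    · exact csInf_le ⟨_, hlb⟩ h1S
  · simp

lemma hipThresh_meas {m k : ℕ} (hk : 1 ≤ k) (j : Fin m) :
    Measurable (hipThresh m k j) := by
  unfold hipThresh
  split_ifs with hkj
  swap
  · exact measurable_const
  have hNmeas : ∀ q : ℝ, Measurable (fun x : Fin m → ℝ =>
      (Finset.univ.filter (fun i : Fin m => i < j ∧ x i ≤ q)).card) := by
    intro q
    have heq : (fun x : Fin m → ℝ => (Finset.univ.filter (fun i : Fin m => i < j ∧ x i ≤ q)).card)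
        = fun x => ∑ i : Fin m, if i < j ∧ x i ≤ q then 1 else 0 := by
      funext x
      rw [Finset.card_filter]
    rw [heq]
    apply Finset.measurable_sum
    intro i _
    by_cases hij : i < j
    · simp only [hij, true_and]
      exact Measurable.ite (measurableSet_le (measurable_pi_apply i) measurable_const)
        measurable_const measurable_const
    · simp [hij]
  apply measurable_of_Iic
  intro a
  have key : (fun x : Fin m → ℝ =>
      sInf {t : ℝ | k ≤ (Finset.univ.filter (fun i : Fin m => i < j ∧ x i ≤ t)).card}) ⁻¹' Set.Iic a
      = ⋂ (q : ℚ) (_ : a < (q : ℝ)),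
        {x : Fin m → ℝ | k ≤ (Finset.univ.filter (fun i : Fin m => i < j ∧ x i ≤ (q:ℝ))).card} := by
    ext x
    simp only [Set.mem_preimage, Set.mem_Iic, Set.mem_iInter, Set.mem_setOf_eq]
    have hne : Set.Nonempty {t : ℝ | k ≤ (Finset.univ.filter (fun i : Fin m => i < j ∧ x i ≤ t)).card} := by
      refine ⟨Finset.univ.sup' ⟨j, Finset.mem_univ j⟩ x, hip_card_ge j x _ hkj ?_⟩
      exact fun i _ => Finset.le_sup' x (Finset.mem_univ i)
    constructor
    · intro hle q hq
      have hlt : sInf {t : ℝ | k ≤ (Finset.univ.filter (fun i : Fin m => i < j ∧ x i ≤ t)).card} < (q:ℝ) :=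
        lt_of_le_of_lt hle hq
      obtain ⟨s, hs, hsq⟩ := exists_lt_of_csInf_lt hne hlt
      exact hip_mono j x hsq.le hs
    · intro hq
      by_contra hlt
      push_neg at hlt
      obtain ⟨q, hq1, hq2⟩ := exists_rat_btwn hlt
      exact absurd (csInf_le ⟨_, hip_bddBelow hk j x⟩ (hq q hq1)) (not_le.mpr hq2)
  rw [key]
  exact MeasurableSet.iInter fun q => MeasurableSet.iInter fun _ =>
    hNmeas (q:ℝ) measurableSet_Ici

lemma hip_ind (c y : ℝ) :
    (fun x : ℝ => if x < y then c else 0) = Set.indicator (Set.Iio y) (fun _ => c) := by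
  funext x
  by_cases h : x < y <;> simp [Set.indicator, Set.mem_Iio, h]

lemma hip_inner (c y : ℝ) (hy : y ∈ Set.Ioc (0:ℝ) 1) :
    ∫ x, (if x < y then c else 0) ∂(volume.restrict (Set.Icc (0:ℝ) 1)) = c * y := by
  rw [hip_ind, integral_indicator measurableSet_Iio, setIntegral_const]
  have hres : (volume.restrict (Set.Icc (0:ℝ) 1)) (Set.Iio y) = ENNReal.ofReal y := by
    rw [Measure.restrict_apply measurableSet_Iio]
    have : Set.Iio y ∩ Set.Icc 0 1 = Set.Ico 0 y := by
      ext x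
      simp only [Set.mem_inter_iff, Set.mem_Iio, Set.mem_Icc, Set.mem_Ico]
      constructor
      · rintro ⟨h1, h2, _⟩; exact ⟨h2, h1⟩
      · rintro ⟨h1, h2⟩; exact ⟨h2, h1, le_trans h2.le hy.2⟩
    rw [this, Real.volume_Ico]
    simp
  rw [measureReal_def, hres, ENNReal.toReal_ofReal hy.1.le, smul_eq_mul, mul_comm]

open scoped BigOperators

/-- The HIP (historic inverse probability) estimator is
unbiased: `E[Ŷ] = ∑_{j=1}^m α_j`. Items are indexed by `Fin m` (ordered by
increasing distance), `r₁,…,r_m` are i.i.d. uniform on `[0,1]`, the HIP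
threshold `τ_j` is the `k`-th smallest value among the ranks of the `j`
preceding items if there are at least `k` of them and `1` otherwise (here the
`k`-th smallest of a finite family is expressed as the infimum of all `t` such
that at least `k` of the values are `≤ t`), item `j` is sampled if
`r_j < τ_j`, and `Ŷ = ∑_{j sampled} α_j / τ_j`. -/
theorem hip_estimator_unbiased
    {Ω : Type*} [MeasurableSpace Ω] (μ : Measure Ω) [IsProbabilityMeasure μ]
    (m : ℕ) (α : Fin m → ℝ) (hα : ∀ j, 0 ≤ α j)
    (k : ℕ) (hk : 1 ≤ k)
    (r : Fin m → Ω → ℝ)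
    (hr_meas : ∀ i, Measurable (r i))
    (hr_indep : ProbabilityTheory.iIndepFun r μ)
    (hr_unif : ∀ i, Measure.map (r i) μ = volume.restrict (Set.Icc (0 : ℝ) 1))
    (τ : Fin m → Ω → ℝ)
    (hτ : ∀ (j : Fin m) (ω : Ω),
      τ j ω = if k ≤ (j : ℕ)
        then sInf {t : ℝ |
          k ≤ (Finset.univ.filter (fun i : Fin m => i < j ∧ r i ω ≤ t)).card}
        else 1)
    (Yhat : Ω → ℝ)
    (hYhat : ∀ ω, Yhat ω = ∑ j : Fin m,
      if r j ω < τ j ω then α j / τ j ω else 0) :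
    ∫ ω, Yhat ω ∂μ = ∑ j : Fin m, α j := by
  classical
  have hUfin : IsProbabilityMeasure (volume.restrict (Set.Icc (0:ℝ) 1)) := by
    constructor
    rw [Measure.restrict_apply_univ]
    simp
  -- a.e. all coordinates are in (0,1]
  have hae : ∀ᵐ ω ∂μ, ∀ i, r i ω ∈ Set.Ioc (0:ℝ) 1 := by
    rw [ae_all_iff]
    intro i
    rw [ae_iff]
    have hms : MeasurableSet ((Set.Ioc (0:ℝ) 1)ᶜ) := measurableSet_Ioc.compl
    have hset : {ω | ¬ r i ω ∈ Set.Ioc (0:ℝ) 1} = r i ⁻¹' (Set.Ioc (0:ℝ) 1)ᶜ := rfl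
    rw [hset, ← Measure.map_apply (hr_meas i) hms, hr_unif i, Measure.restrict_apply hms]
    have : (Set.Ioc (0:ℝ) 1)ᶜ ∩ Set.Icc 0 1 = {(0:ℝ)} := by
      ext x
      simp only [Set.mem_inter_iff, Set.mem_compl_iff, Set.mem_Ioc, Set.mem_Icc,
        Set.mem_singleton_iff, not_and, not_le]
      constructor
      · rintro ⟨h1, h2, h3⟩
        by_contra hx
        have : (0:ℝ) < x := lt_of_le_of_ne h2 (Ne.symm hx)
        exact absurd (h1 this) (not_lt.mpr h3)
      · rintro rfl
        exact ⟨fun h => absurd h (lt_irrefl 0), le_refl 0, zero_le_one⟩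
    rw [this]
    simp
  -- τ as a measurable function of the coordinates
  have hτ_eq : ∀ j : Fin m, τ j = fun ω => hipThresh m k j (fun i => r i ω) := by
    intro j
    funext ω
    rw [hτ j ω]
    rfl
  have hRmeas : Measurable (fun ω (i : Fin m) => r i ω) := measurable_pi_lambda _ hr_meas
  have hτmeas : ∀ j, Measurable (τ j) := by
    intro j
    rw [hτ_eq j]
    exact (hipThresh_meas hk j).comp hRmeas
  have hτIoc : ∀ j, ∀ᵐ ω ∂μ, τ j ω ∈ Set.Ioc (0:ℝ) 1 := by
    intro j
    filter_upwards [hae] with ω hω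
    rw [hτ_eq j]
    exact hipThresh_mem hk j _ hω
  -- independence of τ j and r j
  have hindep : ∀ j : Fin m, ProbabilityTheory.IndepFun (τ j) (r j) μ := by
    intro j
    have hd : Disjoint (Finset.univ.erase j) ({j} : Finset (Fin m)) := by simp
    have h := hr_indep.indepFun_finset (Finset.univ.erase j) {j} hd hr_meas
    set S := Finset.univ.erase j with hS
    let ext : ((i : ↥S) → ℝ) → (Fin m → ℝ) := fun y i =>
      if h : i = j then 0 else y ⟨i, by simp [hS, h]⟩
    have hext : Measurable ext := by
      apply measurable_pi_lambda
      intro i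
      by_cases hij : i = j
      · simp only [ext, hij, dif_pos]
        exact measurable_const
      · simp only [ext, dif_neg hij]
        exact measurable_pi_apply _
    let φ : ((i : ↥S) → ℝ) → ℝ := fun y => hipThresh m k j (ext y)
    have hφ : Measurable φ := (hipThresh_meas hk j).comp hext
    let e : ((i : ↥({j} : Finset (Fin m))) → ℝ) → ℝ :=
      fun y => y ⟨j, Finset.mem_singleton_self j⟩
    have he : Measurable e := measurable_pi_apply _
    have hτcomp : τ j = φ ∘ (fun ω (i : ↥S) => r i ω) := by
      funext ω
      rw [hτ_eq j]
      refine hipThresh_congr j fun i hij => ?_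
      show r i ω = ext (fun i : ↥S => r (i:Fin m) ω) i
      simp only [ext]
      rw [dif_neg (Fin.ne_of_lt hij)]
    have hrcomp : r j = e ∘ (fun ω (i : ↥({j} : Finset (Fin m))) => r i ω) := rfl
    rw [hτcomp, hrcomp]
    exact h.comp hφ he
  -- per-term integrability and expectation
  have key : ∀ j : Fin m,
      Integrable (fun ω => if r j ω < τ j ω then α j / τ j ω else 0) μ ∧
      ∫ ω, (if r j ω < τ j ω then α j / τ j ω else 0) ∂μ = α j := by
    intro j
    have hτae : AEMeasurable (τ j) μ := (hτmeas j).aemeasurable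
    have hpair : μ.map (fun ω => (τ j ω, r j ω)) = (μ.map (τ j)).prod (μ.map (r j)) :=
      (ProbabilityTheory.indepFun_iff_map_prod_eq_prod_map_map hτae
        (hr_meas j).aemeasurable).mp (hindep j)
    rw [hr_unif j] at hpair
    have hprobτ : IsProbabilityMeasure (μ.map (τ j)) := Measure.isProbabilityMeasure_map hτae
    have hmemae : ∀ᵐ y ∂(μ.map (τ j)), y ∈ Set.Ioc (0:ℝ) 1 := by
      exact (ae_map_iff hτae measurableSet_Ioc).mpr (hτIoc j)
    set h2 : ℝ × ℝ → ℝ := fun p => if p.2 < p.1 then α j / p.1 else 0 with hh2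
    have hmeas_h : Measurable h2 := by
      apply Measurable.ite (measurableSet_lt measurable_snd measurable_fst)
      · exact measurable_const.div measurable_fst
      · exact measurable_const
    have hinner : ∀ y ∈ Set.Ioc (0:ℝ) 1, ∫ x, h2 (y, x) ∂(volume.restrict (Set.Icc (0:ℝ) 1)) = α j := by
      intro y hy
      simp only [hh2]
      rw [hip_inner (α j / y) y hy, div_mul_cancel₀ _ (ne_of_gt hy.1)]
    have hinner_norm : ∀ y ∈ Set.Ioc (0:ℝ) 1,
        ∫ x, ‖h2 (y, x)‖ ∂(volume.restrict (Set.Icc (0:ℝ) 1)) = α j := by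
      intro y hy
      have : (fun x => ‖h2 (y, x)‖) = fun x => if x < y then ‖α j / y‖ else 0 := by
        funext x
        simp only [hh2]
        by_cases hxy : x < y <;> simp [hxy]
      rw [this, hip_inner ‖α j / y‖ y hy]
      rw [Real.norm_eq_abs, abs_of_nonneg (div_nonneg (hα j) hy.1.le),
        div_mul_cancel₀ _ (ne_of_gt hy.1)]
    have hint : Integrable h2 ((μ.map (τ j)).prod (volume.restrict (Set.Icc (0:ℝ) 1))) := by
      rw [integrable_prod_iff hmeas_h.aestronglyMeasurable]
      constructor
      · filter_upwards [hmemae] with y hy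
        have : (fun x => h2 (y, x)) = Set.indicator (Set.Iio y) (fun _ => α j / y) := by
          rw [← hip_ind]
        rw [this]
        exact (integrable_const _).indicator measurableSet_Iio
      · apply Integrable.congr (integrable_const (α j))
        filter_upwards [hmemae] with y hy
        exact (hinner_norm y hy).symm
    have hpairae : AEMeasurable (fun ω => (τ j ω, r j ω)) μ :=
      hτae.prodMk (hr_meas j).aemeasurable
    constructor
    · have heq : (fun ω => if r j ω < τ j ω then α j / τ j ω else 0)
          = h2 ∘ (fun ω => (τ j ω, r j ω)) := rfl
      rw [heq]
      refine (integrable_map_measure hmeas_h.aestronglyMeasurable hpairae).mp ?_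
      rw [hpair]
      exact hint
    · calc ∫ ω, (if r j ω < τ j ω then α j / τ j ω else 0) ∂μ
          = ∫ p, h2 p ∂(μ.map (fun ω => (τ j ω, r j ω))) :=
            (integral_map hpairae hmeas_h.aestronglyMeasurable).symm
        _ = ∫ p, h2 p ∂((μ.map (τ j)).prod (volume.restrict (Set.Icc (0:ℝ) 1))) := by rw [hpair]
        _ = ∫ y, ∫ x, h2 (y, x) ∂(volume.restrict (Set.Icc (0:ℝ) 1)) ∂(μ.map (τ j)) :=
            integral_prod h2 hint
        _ = ∫ _, α j ∂(μ.map (τ j)) := by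
            apply integral_congr_ae
            filter_upwards [hmemae] with y hy
            exact hinner y hy
        _ = α j := by simp
  have hsum : ∫ ω, Yhat ω ∂μ
      = ∑ j : Fin m, ∫ ω, (if r j ω < τ j ω then α j / τ j ω else 0) ∂μ := by
    rw [show (fun ω => Yhat ω) = fun ω => ∑ j : Fin m,
      (if r j ω < τ j ω then α j / τ j ω else 0) from funext hYhat]
    exact integral_finset_sum _ fun j _ => (key j).1
  rw [hsum]
  exact Finset.sum_congr rfl fun j _ => (key j).2
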